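/- Let n ≥ 1 and let e₁, …, eₙ denote the elementary symmetric polynomials in the variables x₁, …, xₙ over a commutative ring R. Then the determinant of the n×n Jacobian matrix whose (i, j) entry is the partial derivative ∂e_i/∂x_j equals the Vandermonde product ∏_{1 ≤ i < j ≤ n} (x_i − x_j), as an identity of polynomials in R[x₁, …, xₙ]. -/

import Mathlib

open MvPolynomial
open Finset

lemma pderiv_prod_X {σ : Type*} [DecidableEq σ] {R : Type*} [CommRing R]
    (j : σ) (t : Finset σ) :
    pderiv j (∏ i ∈ t, (X i : MvPolynomial σ R)) =
      if j ∈ t then ∏ i ∈ t.erase j, X i else 0 := by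
  induction t using Finset.induction_on with
  | empty => simp
  | @insert a s ha ih =>
    rw [Finset.prod_insert ha, pderiv_mul, ih]
    by_cases hja : j = a
    · subst hja
      simp [ha, Finset.erase_insert ha]
    · rw [pderiv_X_of_ne (Ne.symm hja)]  -- careful direction
      simp only [zero_mul, mul_ite, mul_zero, zero_add]
      by_cases hjs : j ∈ s
      · simp only [hjs, if_true, Finset.mem_insert, hja, false_or]
        rw [Finset.erase_insert_of_ne (Ne.symm hja),
          Finset.prod_insert (fun h => ha (Finset.mem_of_mem_erase h))]
      · simp [hjs, hja]

lemma pderiv_esymm_eq {n : ℕ} (R : Type*) [CommRing R] (j : Fin n) (k : ℕ) :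
    pderiv j (esymm (Fin n) R (k+1)) =
      ∑ t ∈ (Finset.univ.erase j).powersetCard k, ∏ i ∈ t, (X i : MvPolynomial (Fin n) R) := by
  rw [esymm, map_sum]
  simp_rw [pderiv_prod_X]
  rw [← Finset.sum_filter]
  refine Finset.sum_nbij' (fun t => t.erase j) (fun t => insert j t) ?_ ?_ ?_ ?_ ?_
  · intro t ht
    simp only [Finset.mem_filter, Finset.mem_powersetCard] at ht
    rw [Finset.mem_powersetCard]
    exact ⟨fun x hx => Finset.mem_erase.2 ⟨(Finset.mem_erase.1 hx).1, Finset.mem_univ x⟩,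
      by rw [Finset.card_erase_of_mem ht.2, ht.1.2, Nat.add_sub_cancel]⟩
  · intro t ht
    rw [Finset.mem_powersetCard] at ht
    have hjt : j ∉ t := fun h => (Finset.mem_erase.1 (ht.1 h)).1 rfl
    simp only [Finset.mem_filter, Finset.mem_powersetCard]
    exact ⟨⟨Finset.subset_univ _, by rw [Finset.card_insert_of_notMem hjt, ht.2]⟩,
      Finset.mem_insert_self _ _⟩
  · intro t ht
    simp only [Finset.mem_filter] at ht
    exact Finset.insert_erase ht.2
  · intro t ht
    rw [Finset.mem_powersetCard] at ht
    have hjt : j ∉ t := fun h => (Finset.mem_erase.1 (ht.1 h)).1 rfl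
    exact Finset.erase_insert hjt
  · intro t ht
    rfl

lemma esymm_succ_split {n : ℕ} (R : Type*) [CommRing R] (j : Fin n) (k : ℕ) :
    esymm (Fin n) R (k+1) =
      (∑ t ∈ (Finset.univ.erase j).powersetCard (k+1), ∏ i ∈ t, (X i : MvPolynomial (Fin n) R))
      + X j * ∑ t ∈ (Finset.univ.erase j).powersetCard k, ∏ i ∈ t, X i := by
  have h1 : (Finset.univ : Finset (Fin n)) = insert j (Finset.univ.erase j) :=
    (Finset.insert_erase (Finset.mem_univ j)).symm
  rw [esymm]
  conv_lhs => rw [h1]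
  rw [Finset.powersetCard_succ_insert (Finset.notMem_erase j _)]
  rw [Finset.sum_union]
  · congr 1
    rw [Finset.sum_image]
    · rw [Finset.mul_sum]
      refine Finset.sum_congr rfl fun t ht => ?_
      rw [Finset.mem_powersetCard] at ht
      have hjt : j ∉ t := fun h => (Finset.mem_erase.1 (ht.1 h)).1 rfl
      rw [Finset.prod_insert hjt]
    · intro s hs t ht hst
      rw [Finset.mem_coe, Finset.mem_powersetCard] at hs ht
      have hjs : j ∉ s := fun h => (Finset.mem_erase.1 (hs.1 h)).1 rfl
      have hjt : j ∉ t := fun h => (Finset.mem_erase.1 (ht.1 h)).1 rfl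
      have h2 := congrArg (fun u => Finset.erase u j) hst
      simpa [Finset.erase_insert hjs, Finset.erase_insert hjt] using h2
  · rw [Finset.disjoint_right]
    intro t ht ht'
    rw [Finset.mem_image] at ht
    obtain ⟨s, hs, rfl⟩ := ht
    rw [Finset.mem_powersetCard] at ht'
    exact (Finset.mem_erase.1 (ht'.1 (Finset.mem_insert_self j s))).1 rfl

lemma erased_esymm_formula {n : ℕ} (R : Type*) [CommRing R] (j : Fin n) (k : ℕ) :
    (∑ t ∈ (Finset.univ.erase j).powersetCard k, ∏ i ∈ t, (X i : MvPolynomial (Fin n) R))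
      = ∑ r ∈ Finset.range (k+1), (-1 : MvPolynomial (Fin n) R)^r * X j ^ r * esymm (Fin n) R (k - r) := by
  induction k with
  | zero => simp
  | succ k ih =>
    have hsplit := esymm_succ_split R j k
    have h1 : (∑ t ∈ (Finset.univ.erase j).powersetCard (k+1), ∏ i ∈ t, (X i : MvPolynomial (Fin n) R))
        = esymm (Fin n) R (k+1) - X j * ∑ t ∈ (Finset.univ.erase j).powersetCard k, ∏ i ∈ t, X i := by
      rw [hsplit]; ring
    rw [h1, ih, Finset.sum_range_succ' (fun r => (-1 : MvPolynomial (Fin n) R)^r * X j ^ r * esymm (Fin n) R (k + 1 - r))]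
    simp only [pow_zero, one_mul, Nat.sub_zero]
    rw [Finset.mul_sum]
    rw [sub_eq_iff_eq_add]
    rw [add_comm (∑ _ ∈ _, _) (esymm (Fin n) R (k+1)), add_assoc]
    nth_rewrite 1 [← add_zero (esymm (Fin n) R (k+1))]
    congr 1
    rw [← Finset.sum_add_distrib]
    refine (Finset.sum_eq_zero fun r hr => ?_).symm
    have h2 : k + 1 - (r+1) = k - r := by omega
    rw [h2]; ring

lemma prod_pairs_eq {n : ℕ} {M : Type*} [CommMonoid M] (f : Fin n → Fin n → M) :
    ∏ p ∈ Finset.univ.filter (fun p : Fin n × Fin n => p.1 < p.2), f p.1 p.2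
      = ∏ i : Fin n, ∏ j ∈ Finset.Ioi i, f i j := by
  rw [Finset.prod_sigma']
  refine Finset.prod_nbij' (fun p => ⟨p.1, p.2⟩) (fun p => (p.1, p.2)) ?_ ?_ ?_ ?_ ?_
  · intro p hp
    simp only [Finset.mem_sigma, Finset.mem_Ioi, Finset.mem_filter, Finset.mem_univ,
      true_and] at hp ⊢
    exact hp
  · intro p hp
    simp only [Finset.mem_sigma, Finset.mem_Ioi, Finset.mem_filter, Finset.mem_univ,
      true_and] at hp ⊢
    exact hp
  · intro p _; rfl
  · intro p _; rfl
  · intro p _; rfl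

/-- The determinant of the Jacobian matrix `(∂e_i/∂x_j)_{1 ≤ i, j ≤ n}` of
the elementary symmetric polynomials `e₁, …, eₙ` in `x₁, …, xₙ` equals the Vandermonde
product `∏_{i < j} (x_i − x_j)`. -/
theorem jacobian_esymm_eq_vandermonde (n : ℕ) (hn : 1 ≤ n)
    (R : Type*) [CommRing R] :
    Matrix.det (Matrix.of fun i j : Fin n =>
        MvPolynomial.pderiv j (MvPolynomial.esymm (Fin n) R ((i : ℕ) + 1)))
      = ∏ p ∈ Finset.univ.filter (fun p : Fin n × Fin n => p.1 < p.2),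
          (MvPolynomial.X p.1 - MvPolynomial.X p.2) := by
  classical
  set A : Matrix (Fin n) (Fin n) (MvPolynomial (Fin n) R) :=
    Matrix.of (fun i r : Fin n => if (r:ℕ) ≤ (i:ℕ) then
      (-1 : MvPolynomial (Fin n) R)^(r:ℕ) * esymm (Fin n) R ((i:ℕ) - (r:ℕ)) else 0) with hA
  have hM : (Matrix.of fun i j : Fin n => pderiv j (esymm (Fin n) R ((i : ℕ) + 1)))
      = A * Matrix.transpose (Matrix.vandermonde (fun i : Fin n => (X i : MvPolynomial (Fin n) R))) := by
    refine Matrix.ext fun i j => ?_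
    rw [Matrix.mul_apply]
    simp only [Matrix.of_apply, Matrix.transpose_apply, Matrix.vandermonde_apply, hA]
    rw [pderiv_esymm_eq, erased_esymm_formula]
    rw [Fin.sum_univ_eq_sum_range (fun r => (if r ≤ (i:ℕ) then
      (-1 : MvPolynomial (Fin n) R)^r * esymm (Fin n) R ((i:ℕ) - r) else 0) * X j ^ r) n]
    simp only [ite_mul, zero_mul]
    rw [← Finset.sum_filter]
    have hfil : (Finset.range n).filter (· ≤ (i:ℕ)) = Finset.range ((i:ℕ)+1) := by
      ext x
      simp only [Finset.mem_filter, Finset.mem_range]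
      have := i.isLt
      omega
    rw [hfil]
    exact Finset.sum_congr rfl fun r _ => by ring
  rw [hM, Matrix.det_mul, Matrix.det_transpose, Matrix.det_vandermonde]
  have hdetA : A.det = ∏ i : Fin n, (-1 : MvPolynomial (Fin n) R)^(i:ℕ) := by
    rw [Matrix.det_of_lowerTriangular A (fun i j h => by
      simp only [hA, Matrix.of_apply]
      rw [if_neg]
      simp only [OrderDual.toDual_lt_toDual] at h
      exact not_le.2 (by exact_mod_cast h))]
    refine Finset.prod_congr rfl fun i _ => ?_
    simp [hA]
  rw [hdetA, prod_pairs_eq (fun i j => (X i - X j : MvPolynomial (Fin n) R))]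
  have hrow : ∀ i : Fin n, ∏ j ∈ Finset.Ioi i, (X i - X j : MvPolynomial (Fin n) R)
      = (-1 : MvPolynomial (Fin n) R)^(Finset.Ioi i).card * ∏ j ∈ Finset.Ioi i, (X j - X i) := by
    intro i
    rw [← Finset.prod_const, ← Finset.prod_mul_distrib]
    exact Finset.prod_congr rfl fun j _ => by ring
  simp_rw [hrow]
  rw [Finset.prod_mul_distrib]
  congr 1
  rw [Finset.prod_pow_eq_pow_sum, Finset.prod_pow_eq_pow_sum]
  congr 1
  simp_rw [Fin.card_Ioi]
  rw [Fin.sum_univ_eq_sum_range (fun r => r) n,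
    Fin.sum_univ_eq_sum_range (fun r => n - 1 - r) n]
  exact (Finset.sum_range_reflect (fun r => r) n).symm
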